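/- Suppose M : ℕ → (0,∞) satisfies lim_{N→∞} N(ln ln N)²/(M(N)·ln N) = 0, and let L1(β) = 2M(N)·N·ln(2 sinh(2β)) and L2(β) = 2N·ln(cosh β). Then for each fixed t ≥ 0: (i) lim_{N→∞} [ L1(β_c − t/√(4M(N)N ln N)) − L1(β_c) + (t/√(4M(N)N ln N))·4√2·M(N)·N ] = 0, and (ii) lim_{N→∞} [ L2(β_c − t/√(4M(N)N ln N)) − L2(β_c) ] = 0, where β_c = ln(1+√2)/2. -/

import Mathlib

open Filter Real

/-- The critical inverse temperature of the two-dimensional Ising model. -/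
noncomputable def betac : ℝ := Real.log (1 + Real.sqrt 2) / 2

lemma sqrt2_sq : Real.sqrt 2 ^ 2 = 2 := Real.sq_sqrt (by norm_num)

lemma betac_pos : 0 < betac := by
  have h : (1:ℝ) < 1 + Real.sqrt 2 := by nlinarith [Real.sqrt_nonneg 2, sqrt2_sq]
  have := Real.log_pos h
  simp only [betac]; linarith

lemma exp_two_betac : Real.exp (2 * betac) = 1 + Real.sqrt 2 := by
  have h : (0:ℝ) < 1 + Real.sqrt 2 := by positivity
  simp only [betac]
  rw [show 2 * (Real.log (1 + Real.sqrt 2) / 2) = Real.log (1 + Real.sqrt 2) by ring,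
    Real.exp_log h]

lemma sinh_two_betac : Real.sinh (2 * betac) = 1 := by
  rw [Real.sinh_eq, Real.exp_neg, exp_two_betac]
  have h : (0:ℝ) < 1 + Real.sqrt 2 := by positivity
  field_simp
  nlinarith [sqrt2_sq]

lemma cosh_two_betac : Real.cosh (2 * betac) = Real.sqrt 2 := by
  rw [Real.cosh_eq, Real.exp_neg, exp_two_betac]
  have h : (0:ℝ) < 1 + Real.sqrt 2 := by positivity
  field_simp
  nlinarith [sqrt2_sq]

noncomputable def Ff (u : ℝ) : ℝ :=
  Real.log (2 * Real.sinh (2 * (betac - u))) + 2 * Real.sqrt 2 * u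
noncomputable def Ff' (u : ℝ) : ℝ :=
  2 * Real.sqrt 2 - 2 * Real.cosh (2 * (betac - u)) / Real.sinh (2 * (betac - u))
noncomputable def Kc : ℝ := 4 / Real.sinh betac ^ 2

lemma sinh_pos_of_le {u : ℝ} (hu : u ≤ betac / 2) :
    Real.sinh betac ≤ Real.sinh (2 * (betac - u)) ∧ 0 < Real.sinh (2 * (betac - u)) := by
  have h1 : betac ≤ 2 * (betac - u) := by linarith
  have h2 : Real.sinh betac ≤ Real.sinh (2 * (betac - u)) := Real.sinh_le_sinh.mpr h1
  exact ⟨h2, lt_of_lt_of_le (Real.sinh_pos_iff.mpr betac_pos) h2⟩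

lemma hasDerivAt_Ff {u : ℝ} (hu : u ≤ betac / 2) : HasDerivAt Ff (Ff' u) u := by
  have hs := (sinh_pos_of_le hu).2
  have h1 : HasDerivAt (fun u : ℝ => 2 * (betac - u)) (-2) u := by
    simpa using ((hasDerivAt_id u).const_sub betac).const_mul 2
  have h2 : HasDerivAt (fun u : ℝ => Real.sinh (2 * (betac - u)))
      (Real.cosh (2 * (betac - u)) * (-2)) u := (Real.hasDerivAt_sinh _).comp u h1
  have h3 : HasDerivAt (fun u : ℝ => 2 * Real.sinh (2 * (betac - u)))
      (2 * (Real.cosh (2 * (betac - u)) * (-2))) u := h2.const_mul 2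
  have h4 : HasDerivAt (fun u : ℝ => Real.log (2 * Real.sinh (2 * (betac - u))))
      (2 * (Real.cosh (2 * (betac - u)) * (-2)) / (2 * Real.sinh (2 * (betac - u)))) u :=
    h3.log (by positivity)
  have h5 : HasDerivAt (fun u : ℝ => 2 * Real.sqrt 2 * u) (2 * Real.sqrt 2) u := by
    simpa using (hasDerivAt_id u).const_mul (2 * Real.sqrt 2)
  have := h4.add h5
  refine this.congr_deriv ?_
  simp only [Ff']
  field_simp
  ring

lemma hasDerivAt_Ff' {u : ℝ} (hu : u ≤ betac / 2) :
    HasDerivAt Ff' (-4 / Real.sinh (2 * (betac - u)) ^ 2) u := by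
  have hs := (sinh_pos_of_le hu).2
  have h1 : HasDerivAt (fun u : ℝ => 2 * (betac - u)) (-2) u := by
    simpa using ((hasDerivAt_id u).const_sub betac).const_mul 2
  have h2 : HasDerivAt (fun u : ℝ => Real.sinh (2 * (betac - u)))
      (Real.cosh (2 * (betac - u)) * (-2)) u := (Real.hasDerivAt_sinh _).comp u h1
  have h2c : HasDerivAt (fun u : ℝ => Real.cosh (2 * (betac - u)))
      (Real.sinh (2 * (betac - u)) * (-2)) u := (Real.hasDerivAt_cosh _).comp u h1
  have hdiv := h2c.div h2 (ne_of_gt hs)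
  have h6 := (hdiv.const_mul 2).const_sub (2 * Real.sqrt 2)
  refine (h6.congr_deriv ?_).congr_of_eventuallyEq
    (Eventually.of_forall fun x => by simp [Ff', mul_div_assoc])
  have hid := Real.cosh_sq_sub_sinh_sq (2 * (betac - u))
  rw [show Real.sinh (2*(betac-u)) * -2 * Real.sinh (2*(betac-u)) -
      Real.cosh (2*(betac-u)) * (Real.cosh (2*(betac-u)) * -2) = 2 from by nlinarith [hid]]
  ring

lemma Ff'_zero : Ff' 0 = 0 := by
  simp only [Ff', sub_zero, sinh_two_betac, cosh_two_betac]
  ring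

lemma key1 {u : ℝ} (hu0 : 0 ≤ u) (hu : u ≤ betac / 2) : |Ff u - Ff 0| ≤ Kc * u ^ 2 := by
  have hKc : 0 < Kc := by
    have := Real.sinh_pos_iff.mpr betac_pos
    simp only [Kc]; positivity
  -- Step A : |Ff' s| ≤ Kc * s  on [0, betac/2]
  have stepA : ∀ s ∈ Set.Icc (0:ℝ) (betac/2), |Ff' s| ≤ Kc * s := by
    intro s hs
    have hB := Convex.norm_image_sub_le_of_norm_hasDerivWithin_le
      (f := Ff') (f' := fun s => -4 / Real.sinh (2 * (betac - s)) ^ 2)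
      (s := Set.Icc (0:ℝ) (betac/2)) (C := Kc)
      (fun x hx => (hasDerivAt_Ff' hx.2).hasDerivWithinAt)
      (fun x hx => by
        have h := sinh_pos_of_le hx.2
        have hb : 0 < Real.sinh betac := Real.sinh_pos_iff.mpr betac_pos
        rw [Real.norm_eq_abs, abs_div, abs_neg, abs_of_nonneg (by positivity : (0:ℝ) ≤ 4),
          abs_of_nonneg (by positivity : (0:ℝ) ≤ Real.sinh (2 * (betac - x)) ^ 2)]
        simp only [Kc]
        apply div_le_div_of_nonneg_left (by norm_num) (by positivity)
        nlinarith [h.1, h.2, hb])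
      (convex_Icc _ _) (Set.left_mem_Icc.mpr (le_of_lt (half_pos betac_pos))) hs
    rw [Ff'_zero, sub_zero, sub_zero, Real.norm_eq_abs, Real.norm_eq_abs,
      abs_of_nonneg hs.1] at hB
    exact hB
  -- Step B
  have hB := Convex.norm_image_sub_le_of_norm_hasDerivWithin_le
    (f := Ff) (f' := Ff') (s := Set.Icc (0:ℝ) u) (C := Kc * u)
    (fun x hx => (hasDerivAt_Ff (le_trans hx.2 hu)).hasDerivWithinAt)
    (fun x hx => by
      rw [Real.norm_eq_abs]
      calc |Ff' x| ≤ Kc * x := stepA x ⟨hx.1, le_trans hx.2 hu⟩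
        _ ≤ Kc * u := by nlinarith [hx.2, hKc])
    (convex_Icc _ _) (Set.left_mem_Icc.mpr hu0) (Set.right_mem_Icc.mpr hu0)
  rw [Real.norm_eq_abs, Real.norm_eq_abs, sub_zero, abs_of_nonneg hu0] at hB
  nlinarith [hB]

lemma key2 {u : ℝ} (hu0 : 0 ≤ u) :
    |Real.log (Real.cosh (betac - u)) - Real.log (Real.cosh betac)| ≤ u := by
  have hB := Convex.norm_image_sub_le_of_norm_hasDerivWithin_le
    (f := fun x : ℝ => Real.log (Real.cosh x)) (f' := fun x => Real.tanh x)
    (s := Set.univ) (C := 1)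
    (fun x _ => by
      have h : HasDerivAt (fun x : ℝ => Real.log (Real.cosh x))
          (Real.sinh x / Real.cosh x) x :=
        (Real.hasDerivAt_cosh x).log (ne_of_gt (Real.cosh_pos x))
      rw [← Real.tanh_eq_sinh_div_cosh] at h
      exact h.hasDerivWithinAt)
    (fun x _ => by
      show ‖Real.tanh x‖ ≤ 1
      rw [Real.norm_eq_abs, abs_le]
      constructor
      · rw [Real.tanh_eq_sinh_div_cosh]
        have h1 := Real.cosh_add_sinh x
        have h2 := Real.exp_pos x
        have h3 := Real.cosh_pos x
        rw [le_div_iff₀ h3]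
        nlinarith
      · rw [Real.tanh_eq_sinh_div_cosh]
        have h1 := Real.cosh_sub_sinh x
        have h2 := Real.exp_pos (-x)
        have h3 := Real.cosh_pos x
        rw [div_le_iff₀ h3]
        nlinarith)
    convex_univ (Set.mem_univ (betac - u)) (Set.mem_univ betac)
  simp only [Real.norm_eq_abs, one_mul] at hB
  rw [show betac - (betac - u) = u by ring, abs_of_nonneg hu0, abs_sub_comm] at hB
  exact hB

/-- Suppose `M : ℕ → (0,∞)` satisfies `N(ln ln N)²/(M(N)·ln N) → 0`, and let
`L1(β) = 2M(N)N ln(2 sinh 2β)`, `L2(β) = 2N ln(cosh β)`. Then for each fixed `t ≥ 0`: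
(i) `L1(β_c − t/√(4M(N)N ln N)) − L1(β_c) + (t/√(4M(N)N ln N))·4√2·M(N)·N → 0`, and
(ii) `L2(β_c − t/√(4M(N)N ln N)) − L2(β_c) → 0` as `N → ∞`. -/
theorem stmt15 (M : ℕ → ℝ) (hMpos : ∀ N, 0 < M N)
    (hM : Tendsto (fun N : ℕ =>
        (N : ℝ) * (Real.log (Real.log N)) ^ 2 / (M N * Real.log N)) atTop (nhds 0))
    (t : ℝ) (ht : 0 ≤ t) :
    Tendsto (fun N : ℕ =>
        2 * M N * N *
            Real.log (2 * Real.sinh (2 * (betac - t / Real.sqrt (4 * M N * N * Real.log N))))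
          - 2 * M N * N * Real.log (2 * Real.sinh (2 * betac))
          + t / Real.sqrt (4 * M N * N * Real.log N) * (4 * Real.sqrt 2 * M N * N))
      atTop (nhds 0) ∧
    Tendsto (fun N : ℕ =>
        2 * (N : ℝ) *
            Real.log (Real.cosh (betac - t / Real.sqrt (4 * M N * N * Real.log N)))
          - 2 * N * Real.log (Real.cosh betac))
      atTop (nhds 0) := by
  have hu0 : ∀ N : ℕ, 0 ≤ t / Real.sqrt (4 * M N * N * Real.log N) :=
    fun N => div_nonneg ht (Real.sqrt_nonneg _)
  -- N/(M log N) → 0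
  have hq : Tendsto (fun N : ℕ => (N : ℝ) / (M N * Real.log N)) atTop (nhds 0) := by
    refine squeeze_zero' ?_ ?_ hM
    · filter_upwards [eventually_ge_atTop 1] with N hN
      have h1 : (1:ℝ) ≤ N := by exact_mod_cast hN
      have hlog : 0 ≤ Real.log N := Real.log_nonneg h1
      have := (hMpos N).le
      positivity
    · filter_upwards [eventually_ge_atTop 16] with N hN
      have h16 : (16:ℝ) ≤ N := by exact_mod_cast hN
      have hlogN : Real.exp 1 ≤ Real.log N := by
        have h1 : Real.log 16 ≤ Real.log N := Real.log_le_log (by norm_num) h16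
        have h2 : Real.log 16 = 4 * Real.log 2 := by
          rw [show (16:ℝ) = 2 ^ 4 by norm_num, Real.log_pow]; norm_num
        nlinarith [Real.log_two_gt_d9, Real.exp_one_lt_d9]
      have hlogpos : 0 < Real.log N := lt_of_lt_of_le (Real.exp_pos 1) hlogN
      have hll : 1 ≤ Real.log (Real.log N) := (Real.le_log_iff_exp_le hlogpos).mpr hlogN
      have hd : 0 < M N * Real.log N := mul_pos (hMpos N) hlogpos
      have hNn : (0:ℝ) ≤ N := by linarith
      have hsq : 1 ≤ Real.log (Real.log N) ^ 2 := by nlinarith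
      gcongr
      nlinarith
  -- (N * u N)² → 0
  have hwsq : Tendsto
      (fun N : ℕ => ((N:ℝ) * (t / Real.sqrt (4 * M N * N * Real.log N))) ^ 2)
      atTop (nhds 0) := by
    have h := hq.const_mul (t ^ 2 / 4)
    rw [mul_zero] at h
    refine h.congr' ?_
    filter_upwards [eventually_ge_atTop 2] with N hN
    have hN2 : (2:ℝ) ≤ N := by exact_mod_cast hN
    have hlogpos : 0 < Real.log N := Real.log_pos (by linarith)
    have hMp := hMpos N
    have hNpos : (0:ℝ) < N := by linarith
    have hc : (0:ℝ) < 4 * M N * N * Real.log N := by positivity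
    rw [mul_pow, div_pow, Real.sq_sqrt hc.le]
    field_simp
  have hw0 : ∀ N : ℕ, 0 ≤ (N:ℝ) * (t / Real.sqrt (4 * M N * N * Real.log N)) :=
    fun N => mul_nonneg (Nat.cast_nonneg N) (hu0 N)
  have hw : Tendsto (fun N : ℕ => (N:ℝ) * (t / Real.sqrt (4 * M N * N * Real.log N)))
      atTop (nhds 0) := by
    have h := (Real.continuous_sqrt.tendsto' 0 0 Real.sqrt_zero).comp hwsq
    exact h.congr fun N => Real.sqrt_sq (hw0 N)
  have hu_lim : Tendsto (fun N : ℕ => t / Real.sqrt (4 * M N * N * Real.log N))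
      atTop (nhds 0) := by
    refine squeeze_zero' (Eventually.of_forall hu0) ?_ hw
    filter_upwards [eventually_ge_atTop 1] with N hN
    have h1 : (1:ℝ) ≤ N := by exact_mod_cast hN
    nlinarith [hu0 N]
  have husmall : ∀ᶠ N : ℕ in atTop, t / Real.sqrt (4 * M N * N * Real.log N) ≤ betac / 2 :=
    hu_lim.eventually (eventually_le_nhds (half_pos betac_pos))
  constructor
  · refine squeeze_zero_norm' (a := fun N : ℕ => Kc * t ^ 2 / (2 * Real.log N)) ?_ ?_
    · filter_upwards [husmall, eventually_ge_atTop 2] with N hsm hN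
      set v := t / Real.sqrt (4 * M N * N * Real.log N) with hv
      have hN2 : (2:ℝ) ≤ N := by exact_mod_cast hN
      have hlogpos : 0 < Real.log N := Real.log_pos (by linarith)
      have hMp := hMpos N
      have hNpos : (0:ℝ) < N := by linarith
      have hc : (0:ℝ) < 4 * M N * N * Real.log N := by positivity
      have hv2 : v ^ 2 = t ^ 2 / (4 * M N * N * Real.log N) := by
        rw [hv, div_pow, Real.sq_sqrt hc.le]
      have hkey := key1 (hu0 N) hsm
      calc ‖2 * M N * N * Real.log (2 * Real.sinh (2 * (betac - v)))
            - 2 * M N * N * Real.log (2 * Real.sinh (2 * betac))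
            + v * (4 * Real.sqrt 2 * M N * N)‖
          = 2 * M N * N * |Ff v - Ff 0| := by
            rw [Real.norm_eq_abs, show
              2 * M N * N * Real.log (2 * Real.sinh (2 * (betac - v)))
                - 2 * M N * N * Real.log (2 * Real.sinh (2 * betac))
                + v * (4 * Real.sqrt 2 * M N * N)
              = 2 * M N * N * (Ff v - Ff 0) by
                simp only [Ff, sub_zero, mul_zero, add_zero]; ring,
              abs_mul, abs_of_nonneg (by positivity : (0:ℝ) ≤ 2 * M N * N)]
        _ ≤ 2 * M N * N * (Kc * v ^ 2) := by
            exact mul_le_mul_of_nonneg_left hkey (by positivity)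
        _ = Kc * t ^ 2 / (2 * Real.log N) := by
            rw [hv2]; field_simp; ring
    · have hlog : Tendsto (fun N : ℕ => Real.log N) atTop atTop :=
        Real.tendsto_log_atTop.comp tendsto_natCast_atTop_atTop
      have h := hlog.inv_tendsto_atTop.const_mul (Kc * t ^ 2 / 2)
      rw [mul_zero] at h
      refine h.congr fun N => ?_
      simp only [Pi.inv_apply]
      rw [← div_eq_mul_inv, div_div]
  · refine squeeze_zero_norm'
      (a := fun N : ℕ => 2 * ((N:ℝ) * (t / Real.sqrt (4 * M N * N * Real.log N)))) ?_ ?_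
    · refine Eventually.of_forall fun N => ?_
      set v := t / Real.sqrt (4 * M N * N * Real.log N) with hv
      have hk := key2 (u := v) (hu0 N)
      rw [Real.norm_eq_abs, show
        2 * (N:ℝ) * Real.log (Real.cosh (betac - v)) - 2 * N * Real.log (Real.cosh betac)
          = (2 * N) * (Real.log (Real.cosh (betac - v)) - Real.log (Real.cosh betac)) by ring,
        abs_mul, abs_of_nonneg (by positivity : (0:ℝ) ≤ 2 * (N:ℝ))]
      have hNn : (0:ℝ) ≤ (N:ℝ) := Nat.cast_nonneg N
      nlinarith [abs_nonneg
        (Real.log (Real.cosh (betac - v)) - Real.log (Real.cosh betac))]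
    · have := hw.const_mul 2
      rw [mul_zero] at this
      exact this
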